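/- Let Y_1,...,Y_p be independent with E(Y_i)=θ_i, Var(Y_i)=V(θ_i)/τ_i where V(θ)=ν_0+ν_1θ+ν_2θ² and τ_i+ν_2>0. For fixed b∈[0,1]^p and μ∈ℝ, define the shrinkage estimator θ̂_i = (1−b_i)Y_i + b_i μ and URE(b,μ) = (1/p)Σ_i [b_i²(Y_i−μ)² + (1−2b_i)V(Y_i)/(τ_i+ν_2)]. Then E[URE(b,μ)] = (1/p)Σ_i E[(θ̂_i−θ_i)²], i.e., URE is an unbiased estimate of the risk. -/

import Mathlib

open MeasureTheory ProbabilityTheory Filter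

lemma key_quad {Ω : Type*} [MeasurableSpace Ω] (μ : Measure Ω) [IsProbabilityMeasure μ]
    (X : Ω → ℝ) (hX : MemLp X 2 μ) (c0 c1 c2 : ℝ) :
    ∫ ω, (c0 + c1 * X ω + c2 * X ω ^ 2) ∂μ
      = c0 + c1 * (∫ ω, X ω ∂μ) + c2 * (∫ ω, X ω ^ 2 ∂μ) := by
  have h1 : Integrable X μ := hX.integrable one_le_two
  have h2 : Integrable (fun ω => X ω ^ 2) μ := by
    simpa [sq] using hX.integrable_sq
  have hA : Integrable (fun ω => c0 + c1 * X ω) μ := (integrable_const c0).add (h1.const_mul c1)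
  have hB : Integrable (fun ω => c2 * X ω ^ 2) μ := h2.const_mul c2
  have hC : Integrable (fun ω => c1 * X ω) μ := h1.const_mul c1
  rw [integral_add hA hB, integral_add (integrable_const c0) hC]
  simp [integral_const_mul]

/-- URE(b, μ0) is an unbiased estimate of the risk of the
shrinkage estimator `θ̂ i = (1 - b i) * Y i + b i * μ0`. -/
theorem stmt1 {Ω : Type*} [MeasurableSpace Ω] (μ : Measure Ω) [IsProbabilityMeasure μ]
    (p : ℕ) (hp : 0 < p) (Y : Fin p → Ω → ℝ) (θ τ : Fin p → ℝ) (ν0 ν1 ν2 : ℝ)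
    (hind : iIndepFun Y μ)
    (hτ : ∀ i, 0 < τ i) (hτν : ∀ i, 0 < τ i + ν2)
    (hL2 : ∀ i, MemLp (Y i) 2 μ)
    (hmean : ∀ i, ∫ ω, Y i ω ∂μ = θ i)
    (hvar : ∀ i, variance (Y i) μ = (ν0 + ν1 * θ i + ν2 * θ i ^ 2) / τ i)
    (b : Fin p → ℝ) (hb : ∀ i, b i ∈ Set.Icc (0:ℝ) 1) (μ0 : ℝ) :
    ∫ ω, (1 / (p:ℝ)) * ∑ i, (b i ^ 2 * (Y i ω - μ0) ^ 2
        + (1 - 2 * b i) * ((ν0 + ν1 * Y i ω + ν2 * Y i ω ^ 2) / (τ i + ν2))) ∂μ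
      = ∫ ω, (1 / (p:ℝ)) * ∑ i, (((1 - b i) * Y i ω + b i * μ0) - θ i) ^ 2 ∂μ := by
  have h1 : ∀ i, Integrable (Y i) μ := fun i => (hL2 i).integrable one_le_two
  have h2 : ∀ i, Integrable (fun ω => Y i ω ^ 2) μ := fun i => by
    simpa [sq] using (hL2 i).integrable_sq
  have hY2 : ∀ i, ∫ ω, Y i ω ^ 2 ∂μ = (ν0 + ν1 * θ i + ν2 * θ i ^ 2) / τ i + θ i ^ 2 := by
    intro i
    have h := variance_eq_sub (hL2 i)
    rw [hvar i, hmean i] at h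
    have h2' : μ[(Y i) ^ 2] = ∫ ω, Y i ω ^ 2 ∂μ := by rfl
    rw [h2'] at h
    linarith
  -- per-term integrability
  have hIL : ∀ i, Integrable (fun ω => b i ^ 2 * (Y i ω - μ0) ^ 2
      + (1 - 2 * b i) * ((ν0 + ν1 * Y i ω + ν2 * Y i ω ^ 2) / (τ i + ν2))) μ := by
    intro i
    have : (fun ω => b i ^ 2 * (Y i ω - μ0) ^ 2
        + (1 - 2 * b i) * ((ν0 + ν1 * Y i ω + ν2 * Y i ω ^ 2) / (τ i + ν2)))
        = fun ω => (b i ^ 2 * μ0 ^ 2 + (1 - 2 * b i) * ν0 / (τ i + ν2))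
          + (-(2 * b i ^ 2 * μ0) + (1 - 2 * b i) * ν1 / (τ i + ν2)) * Y i ω
          + (b i ^ 2 + (1 - 2 * b i) * ν2 / (τ i + ν2)) * Y i ω ^ 2 := by
      funext ω
      have hne := ne_of_gt (hτν i)
      field_simp
      ring
    rw [this]
    exact ((integrable_const _).add ((h1 i).const_mul _)).add ((h2 i).const_mul _)
  have hIR : ∀ i, Integrable (fun ω => (((1 - b i) * Y i ω + b i * μ0) - θ i) ^ 2) μ := by
    intro i
    have : (fun ω => (((1 - b i) * Y i ω + b i * μ0) - θ i) ^ 2)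
        = fun ω => (b i * μ0 - θ i) ^ 2
          + (2 * (1 - b i) * (b i * μ0 - θ i)) * Y i ω
          + (1 - b i) ^ 2 * Y i ω ^ 2 := by
      funext ω; ring
    rw [this]
    exact ((integrable_const _).add ((h1 i).const_mul _)).add ((h2 i).const_mul _)
  simp_rw [integral_const_mul]
  congr 1
  rw [integral_finset_sum _ (fun i _ => hIL i), integral_finset_sum _ (fun i _ => hIR i)]
  refine Finset.sum_congr rfl fun i _ => ?_
  have hne := ne_of_gt (hτν i)
  have hneτ := ne_of_gt (hτ i)
  have eL : (fun ω => b i ^ 2 * (Y i ω - μ0) ^ 2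
      + (1 - 2 * b i) * ((ν0 + ν1 * Y i ω + ν2 * Y i ω ^ 2) / (τ i + ν2)))
      = fun ω => (b i ^ 2 * μ0 ^ 2 + (1 - 2 * b i) * ν0 / (τ i + ν2))
        + (-(2 * b i ^ 2 * μ0) + (1 - 2 * b i) * ν1 / (τ i + ν2)) * Y i ω
        + (b i ^ 2 + (1 - 2 * b i) * ν2 / (τ i + ν2)) * Y i ω ^ 2 := by
    funext ω; field_simp; ring
  have eR : (fun ω => (((1 - b i) * Y i ω + b i * μ0) - θ i) ^ 2)
      = fun ω => (b i * μ0 - θ i) ^ 2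
        + (2 * (1 - b i) * (b i * μ0 - θ i)) * Y i ω
        + (1 - b i) ^ 2 * Y i ω ^ 2 := by
    funext ω; ring
  rw [eL, eR, key_quad μ (Y i) (hL2 i), key_quad μ (Y i) (hL2 i), hmean i, hY2 i]
  field_simp
  ring
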